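/- Every maximal solution of the equation φ'' + (1/M₀)·‖φ'‖·φ' = 0 in ℝ^d with initial condition φ(0) = p, φ'(0) = u ≠ 0 is given by φ(t) = p + M₀·log(1 + ‖u‖t/M₀)·(u/‖u‖), defined on (-M₀/‖u‖, ∞); in particular its speed is ‖φ'(t)‖ = M₀‖u‖/(M₀ + t‖u‖). -/

import Mathlib

open Set Metric

/-- The vector field `x ↦ -((1/M₀)‖x‖) x` is Lipschitz on closed balls. -/
lemma uv_lipschitz {E : Type*} [NormedAddCommGroup E] [NormedSpace ℝ E]
    (M₀ R : ℝ) (hM : 0 < M₀) :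
    LipschitzOnWith (Real.toNNReal (2 * R / M₀))
      (fun x : E => -(((1 / M₀) * ‖x‖) • x)) (Metric.closedBall (0 : E) R) := by
  have hR : 0 ≤ R ∨ Metric.closedBall (0:E) R = ∅ := by
    rcases le_or_gt 0 R with h | h
    · exact Or.inl h
    · exact Or.inr (Metric.closedBall_eq_empty.mpr h)
  rcases hR with hR | hR
  swap
  · rw [hR]; exact (LipschitzOnWith.of_dist_le_mul (by simp))
  apply LipschitzOnWith.of_dist_le_mul
  intro a ha b hb
  rw [mem_closedBall, dist_zero_right] at ha hb
  rw [dist_eq_norm, dist_eq_norm]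
  have key : ‖a‖ • a - ‖b‖ • b = ‖a‖ • (a - b) + (‖a‖ - ‖b‖) • b := by
    rw [smul_sub, sub_smul]; abel
  have h1 : ‖(‖a‖ • a - ‖b‖ • b)‖ ≤ 2 * R * ‖a - b‖ := by
    rw [key]
    calc ‖(‖a‖ • (a - b) + (‖a‖ - ‖b‖) • b)‖
        ≤ ‖(‖a‖ • (a - b))‖ + ‖((‖a‖ - ‖b‖) • b)‖ := norm_add_le _ _
      _ = ‖a‖ * ‖a - b‖ + |‖a‖ - ‖b‖| * ‖b‖ := by
          rw [norm_smul, norm_smul, Real.norm_eq_abs, Real.norm_eq_abs,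
            abs_of_nonneg (norm_nonneg a)]
      _ ≤ R * ‖a - b‖ + ‖a - b‖ * R := by
          gcongr
          · exact abs_norm_sub_norm_le a b
      _ = 2 * R * ‖a - b‖ := by ring
  have : (fun x : E => -(((1 / M₀) * ‖x‖) • x)) a - (fun x : E => -(((1 / M₀) * ‖x‖) • x)) b
      = -((1/M₀) • (‖a‖ • a - ‖b‖ • b)) := by
    simp only [smul_smul, smul_sub]
    ring_nf
    module
  rw [this, norm_neg, norm_smul, Real.norm_eq_abs, abs_of_nonneg (by positivity : (0:ℝ) ≤ 1/M₀)]
  have hcoe : (Real.toNNReal (2 * R / M₀) : ℝ) = 2 * R / M₀ := by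
    rw [Real.coe_toNNReal]; positivity
  rw [hcoe]
  calc (1/M₀) * ‖(‖a‖ • a - ‖b‖ • b)‖ ≤ (1/M₀) * (2 * R * ‖a - b‖) := by
        gcongr
    _ = 2 * R / M₀ * ‖a - b‖ := by ring

/-- Derivative of the explicit velocity. -/
lemma uv_v0_deriv {E : Type*} [NormedAddCommGroup E] [NormedSpace ℝ E]
    (M₀ : ℝ) (hM : 0 < M₀) (u : E) (t : ℝ) (hD : 0 < M₀ + t * ‖u‖) :
    HasDerivAt (fun s => (M₀ / (M₀ + s * ‖u‖)) • u)
      (-(((1 / M₀) * ‖(M₀ / (M₀ + t * ‖u‖)) • u‖) • ((M₀ / (M₀ + t * ‖u‖)) • u))) t := by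
  have hD' : M₀ + t * ‖u‖ ≠ 0 := ne_of_gt hD
  have hden : HasDerivAt (fun s : ℝ => M₀ + s * ‖u‖) ‖u‖ t := by
    simpa using ((hasDerivAt_id t).mul_const ‖u‖).const_add M₀
  have hg : HasDerivAt (fun s : ℝ => M₀ / (M₀ + s * ‖u‖))
      (-(M₀ * ‖u‖) / (M₀ + t * ‖u‖)^2) t := by
    have := (hasDerivAt_const t M₀).div hden hD'
    simpa [Pi.div_def] using this
  have := hg.smul_const u
  convert this using 1
  have hnorm : ‖(M₀ / (M₀ + t * ‖u‖)) • u‖ = (M₀ / (M₀ + t * ‖u‖)) * ‖u‖ := by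
    rw [norm_smul, Real.norm_eq_abs, abs_of_pos (by positivity)]
  rw [hnorm, smul_smul, ← neg_smul]
  congr 1
  field_simp

theorem statement12 (d : ℕ) (M₀ : ℝ) (hM₀ : 0 < M₀)
    (p u : EuclideanSpace ℝ (Fin d)) (hu : u ≠ 0)
    (J : Set ℝ) (hJ : IsOpen J) (hconn : J.OrdConnected) (h0 : (0 : ℝ) ∈ J)
    (φ φ' : ℝ → EuclideanSpace ℝ (Fin d))
    (hφ : ∀ t ∈ J, HasDerivAt φ (φ' t) t)
    (heq : ∀ t ∈ J, HasDerivAt φ' (-(((1 / M₀) * ‖φ' t‖) • φ' t)) t)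
    (hp : φ 0 = p) (hu0 : φ' 0 = u) :
    J ⊆ Set.Ioi (-(M₀ / ‖u‖)) ∧
    ∀ t ∈ J, φ t = p + (M₀ * Real.log (1 + ‖u‖ * t / M₀)) • (‖u‖⁻¹ • u) ∧
      ‖φ' t‖ = M₀ * ‖u‖ / (M₀ + t * ‖u‖) := by
  have hnu : 0 < ‖u‖ := norm_pos_iff.mpr hu
  have hD : ∀ s : ℝ, -(M₀ / ‖u‖) < s → 0 < M₀ + s * ‖u‖ := by
    intro s hs
    have h1 := mul_lt_mul_of_pos_right hs hnu
    rw [neg_mul, div_mul_cancel₀ _ (ne_of_gt hnu)] at h1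
    linarith
  set v₀ : ℝ → EuclideanSpace ℝ (Fin d) := fun s => (M₀ / (M₀ + s * ‖u‖)) • u with hv₀
  have hinit : φ' 0 = v₀ 0 := by
    rw [hu0, hv₀]; simp [div_self hM₀.ne']
  -- uniqueness of the velocity
  have key : ∀ t ∈ J, -(M₀ / ‖u‖) < t → φ' t = v₀ t := by
    intro t ht hgt
    rcases lt_trichotomy t 0 with h | h | h
    · -- t < 0 : use left uniqueness on Icc t 0
      have hIcc : Icc t 0 ⊆ J := hconn.out ht h0
      have hcontφ : ContinuousOn φ' (Icc t 0) :=
        fun s hs => (heq s (hIcc hs)).continuousAt.continuousWithinAt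
      have hDs : ∀ s ∈ Icc t 0, 0 < M₀ + s * ‖u‖ :=
        fun s hs => hD s (lt_of_lt_of_le hgt hs.1)
      have hcontv : ContinuousOn v₀ (Icc t 0) :=
        fun s hs => (uv_v0_deriv M₀ hM₀ u s (hDs s hs)).continuousAt.continuousWithinAt
      obtain ⟨R1, hR1⟩ := isCompact_Icc.exists_bound_of_continuousOn hcontφ
      obtain ⟨R2, hR2⟩ := isCompact_Icc.exists_bound_of_continuousOn hcontv
      set R := max R1 R2 with hR
      have huniq : EqOn φ' v₀ (Icc t 0) := by
        apply ODE_solution_unique_of_mem_Icc_left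
          (fun _ _ => uv_lipschitz M₀ R hM₀) hcontφ
          (fun s hs => (heq s (hIcc (Ioc_subset_Icc_self hs))).hasDerivWithinAt)
          (fun s hs => mem_closedBall_zero_iff.mpr
            (le_trans (hR1 s (Ioc_subset_Icc_self hs)) (le_max_left _ _)))
          hcontv
          (fun s hs => (uv_v0_deriv M₀ hM₀ u s
            (hDs s (Ioc_subset_Icc_self hs))).hasDerivWithinAt)
          (fun s hs => mem_closedBall_zero_iff.mpr
            (le_trans (hR2 s (Ioc_subset_Icc_self hs)) (le_max_right _ _)))
          hinit
      exact huniq ⟨le_rfl, h.le⟩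
    · rw [h]; exact hinit
    · -- t > 0 : use right uniqueness on Icc 0 t
      have hIcc : Icc 0 t ⊆ J := hconn.out h0 ht
      have hcontφ : ContinuousOn φ' (Icc 0 t) :=
        fun s hs => (heq s (hIcc hs)).continuousAt.continuousWithinAt
      have hDs : ∀ s ∈ Icc 0 t, 0 < M₀ + s * ‖u‖ := by
        intro s hs
        have : 0 ≤ s * ‖u‖ := mul_nonneg hs.1 hnu.le
        linarith
      have hcontv : ContinuousOn v₀ (Icc 0 t) :=
        fun s hs => (uv_v0_deriv M₀ hM₀ u s (hDs s hs)).continuousAt.continuousWithinAt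
      obtain ⟨R1, hR1⟩ := isCompact_Icc.exists_bound_of_continuousOn hcontφ
      obtain ⟨R2, hR2⟩ := isCompact_Icc.exists_bound_of_continuousOn hcontv
      set R := max R1 R2 with hR
      have huniq : EqOn φ' v₀ (Icc 0 t) := by
        apply ODE_solution_unique_of_mem_Icc_right
          (fun _ _ => uv_lipschitz M₀ R hM₀) hcontφ
          (fun s hs => (heq s (hIcc (Ico_subset_Icc_self hs))).hasDerivWithinAt)
          (fun s hs => mem_closedBall_zero_iff.mpr
            (le_trans (hR1 s (Ico_subset_Icc_self hs)) (le_max_left _ _)))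
          hcontv
          (fun s hs => (uv_v0_deriv M₀ hM₀ u s
            (hDs s (Ico_subset_Icc_self hs))).hasDerivWithinAt)
          (fun s hs => mem_closedBall_zero_iff.mpr
            (le_trans (hR2 s (Ico_subset_Icc_self hs)) (le_max_right _ _)))
          hinit
      exact huniq ⟨h.le, le_rfl⟩
  -- J is contained in the maximal interval
  have hJsub : J ⊆ Set.Ioi (-(M₀ / ‖u‖)) := by
    intro t₀ ht₀
    by_contra hc
    rw [Set.mem_Ioi, not_lt] at hc
    have hIcc : Icc t₀ 0 ⊆ J := hconn.out ht₀ h0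
    have hcontφ : ContinuousOn φ' (Icc t₀ 0) :=
      fun s hs => (heq s (hIcc hs)).continuousAt.continuousWithinAt
    obtain ⟨C0, hC0⟩ := isCompact_Icc.exists_bound_of_continuousOn hcontφ
    set C := max C0 0 with hC
    have hC1 : (0:ℝ) < C + 1 := by positivity
    set ε := min (M₀ / ‖u‖ / 2) (M₀ / (C + 1)) with hε'
    have hε : 0 < ε := lt_min (by positivity) (by positivity)
    set s := -(M₀ / ‖u‖) + ε with hs'
    have hs1 : -(M₀ / ‖u‖) < s := by rw [hs']; linarith
    have hs0 : s < 0 := by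
      have h1 : ε ≤ M₀ / ‖u‖ / 2 := min_le_left _ _
      have h2 : 0 < M₀ / ‖u‖ := by positivity
      rw [hs']; linarith
    have hsJ : s ∈ J := hIcc ⟨le_of_lt (lt_of_le_of_lt hc hs1), hs0.le⟩
    have hkey := key s hsJ hs1
    have hDen : M₀ + s * ‖u‖ = ε * ‖u‖ := by
      rw [hs', add_mul, neg_mul, div_mul_cancel₀ _ (ne_of_gt hnu)]
      ring
    have hnorm : ‖φ' s‖ = M₀ / ε := by
      rw [hkey]
      show ‖(M₀ / (M₀ + s * ‖u‖)) • u‖ = M₀ / ε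
      rw [norm_smul, Real.norm_eq_abs, hDen,
        abs_of_pos (by positivity : (0:ℝ) < M₀ / (ε * ‖u‖)),
        div_mul_eq_mul_div, mul_div_mul_right _ _ (ne_of_gt hnu)]
    have hbig : C + 1 ≤ M₀ / ε := by
      rw [le_div_iff₀ hε]
      calc (C + 1) * ε ≤ (C + 1) * (M₀ / (C + 1)) := by
            exact mul_le_mul_of_nonneg_left (min_le_right _ _) hC1.le
        _ = M₀ := mul_div_cancel₀ _ hC1.ne'
    have hsmall : ‖φ' s‖ ≤ C :=
      le_trans (hC0 s ⟨le_of_lt (lt_of_le_of_lt hc hs1), hs0.le⟩) (le_max_left _ _)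
    rw [hnorm] at hsmall
    linarith
  refine ⟨hJsub, fun t ht => ?_⟩
  have hDt : 0 < M₀ + t * ‖u‖ := hD t (hJsub ht)
  constructor
  · -- the position formula
    set ψ : ℝ → EuclideanSpace ℝ (Fin d) :=
      fun s => p + (M₀ * Real.log (1 + ‖u‖ * s / M₀)) • (‖u‖⁻¹ • u) with hψ'
    have hψd : ∀ s : ℝ, -(M₀ / ‖u‖) < s → HasDerivAt ψ (v₀ s) s := by
      intro s hsgt
      have hDs := hD s hsgt
      have harg : 1 + ‖u‖ * s / M₀ = (M₀ + s * ‖u‖) / M₀ := by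
        field_simp
      have hargpos : 0 < 1 + ‖u‖ * s / M₀ := by rw [harg]; positivity
      have hinner : HasDerivAt (fun r : ℝ => 1 + ‖u‖ * r / M₀) (‖u‖ / M₀) s := by
        simpa using (((hasDerivAt_id s).const_mul ‖u‖).div_const M₀).const_add 1
      have hlog := (hinner.log hargpos.ne')
      have := ((hlog.const_mul M₀).smul_const (‖u‖⁻¹ • u)).const_add p
      convert this using 1
      show (M₀ / (M₀ + s * ‖u‖)) • u = _
      rw [smul_smul, harg]
      congr 1
      have h3 := hDs.ne'
      field_simp
      all_goals rfl
    have hdiff : ∀ r ∈ J, HasDerivAt (fun w => φ w - ψ w) 0 r := by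
      intro r hr
      have := (hφ r hr).sub (hψd r (hJsub hr))
      rwa [key r hr (hJsub hr), sub_self] at this
    have hconv : Convex ℝ J := hconn.convex
    have hfd : ∀ r ∈ J, fderivWithin ℝ (fun w => φ w - ψ w) J r = 0 := by
      intro r hr
      have h1 : HasFDerivWithinAt (fun w => φ w - ψ w)
          (0 : ℝ →L[ℝ] EuclideanSpace ℝ (Fin d)) J r := by
        have h2 := ((hdiff r hr).hasFDerivAt.hasFDerivWithinAt (s := J))
        convert h2 using 1
        ext x
        simp [ContinuousLinearMap.toSpanSingleton_zero]
        ext x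
        simp
      exact h1.fderivWithin (hJ.uniqueDiffOn r hr)
    have hcst := hconv.is_const_of_fderivWithin_eq_zero
      (fun r hr => ((hdiff r hr).differentiableAt).differentiableWithinAt) hfd ht h0
    have hψ0 : ψ 0 = p := by rw [hψ']; simp
    have : φ t - ψ t = 0 := by rw [hcst, hp, hψ0, sub_self]
    have hφt : φ t = ψ t := sub_eq_zero.mp this
    rw [hφt]
  · -- the speed formula
    rw [key t ht (hJsub ht)]
    show ‖(M₀ / (M₀ + t * ‖u‖)) • u‖ = M₀ * ‖u‖ / (M₀ + t * ‖u‖)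
    rw [norm_smul, Real.norm_eq_abs, abs_of_pos (by positivity : (0:ℝ) < M₀ / (M₀ + t * ‖u‖))]
    rw [div_mul_eq_mul_div]
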